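/- Almost surely, sup_{t ∈ [h,T−h]} |(N_{n(t+h)} − N_{nt})/(nh/μ_ri(h,t)) − 1| → 0 and sup_{t ∈ [h,T−h]} |(N_{nt} − N_{n(t−h)})/(nh/μ_le(h,t)) − 1| → 0 as n → ∞. -/

import Mathlib

open MeasureTheory ProbabilityTheory Filter Topology

/-- Partial sum `S_k = ξ_1 + ⋯ + ξ_k` of the life times (1-indexed), `S_0 = 0`. -/
noncomputable def pSum {Ω : Type*} (ξ : ℕ → Ω → ℝ) (k : ℕ) (ω : Ω) : ℝ :=
  ∑ i ∈ Finset.Icc 1 k, ξ i ω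

/-- Counting process `N_t = max {k ≥ 0 : S_k ≤ t}`. -/
noncomputable def cnt {Ω : Type*} (ξ : ℕ → Ω → ℝ) (t : ℝ) (ω : Ω) : ℕ :=
  sSup {k : ℕ | pSum ξ k ω ≤ t}

/-- Empirical mean `μ̂_t = (1/N_t) ∑_{i=1}^{N_t} ξ_i` of the life times up to time `t`
(equal to `0` by the division-by-zero convention if `N_t = 0`). -/
noncomputable def muHat {Ω : Type*} (ξ : ℕ → Ω → ℝ) (t : ℝ) (ω : Ω) : ℝ :=
  pSum ξ (cnt ξ t ω) ω / (cnt ξ t ω)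


/-- Counting process of the compound process `Φ^{(n)}`, which consists of the points of
the renewal process generated by `ξ1` in `[0, nc]` together with the points of the
renewal process generated by `ξ2` in `(nc, nT]`. -/
noncomputable def Ncomp {Ω : Type*} (ξ1 ξ2 : ℕ → Ω → ℝ) (c : ℝ) (n : ℕ) (t : ℝ)
    (ω : Ω) : ℕ :=
  if t ≤ (n : ℝ) * c then cnt ξ1 t ω
  else cnt ξ1 ((n : ℝ) * c) ω + (cnt ξ2 t ω - cnt ξ2 ((n : ℝ) * c) ω)

/-- The `i`-th event time of the compound process `Φ^{(n)}`: for `i ≤ N₁(nc)` it is the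
`i`-th point of the first renewal process, afterwards it is the
`(N₂(nc) + (i − N₁(nc)))`-th point of the second renewal process. -/
noncomputable def Tev {Ω : Type*} (ξ1 ξ2 : ℕ → Ω → ℝ) (c : ℝ) (n : ℕ) (i : ℕ)
    (ω : Ω) : ℝ :=
  if i ≤ cnt ξ1 ((n : ℝ) * c) ω then pSum ξ1 i ω
  else pSum ξ2 (cnt ξ2 ((n : ℝ) * c) ω + (i - cnt ξ1 ((n : ℝ) * c) ω)) ω

/-- The `i`-th life time of the compound process `Φ^{(n)}`. -/
noncomputable def lifeT {Ω : Type*} (ξ1 ξ2 : ℕ → Ω → ℝ) (c : ℝ) (n : ℕ) (i : ℕ)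
    (ω : Ω) : ℝ :=
  Tev ξ1 ξ2 c n i ω - Tev ξ1 ξ2 c n (i - 1) ω

/-- The limiting right-window mean function `μ_ri(h,t)`. -/
noncomputable def muRi (μ1 μ2 c h t : ℝ) : ℝ :=
  if t ≤ c - h then μ1
  else if c ≤ t then μ2
  else h / ((c - t) / μ1 + (t + h - c) / μ2)

/-- The limiting left-window mean function `μ_le(h,t)`. -/
noncomputable def muLe (μ1 μ2 c h t : ℝ) : ℝ :=
  if t ≤ c then μ1
  else if c + h ≤ t then μ2
  else h / ((c - (t - h)) / μ1 + (t - c) / μ2)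

section Polya

/-- Polya's theorem: monotone functions converging pointwise on a compact interval to a
continuous function converge uniformly. -/
lemma polya {f : ℕ → ℝ → ℝ} {g : ℝ → ℝ} {a b : ℝ} (hab : a < b)
    (hf : ∀ n, MonotoneOn (f n) (Set.Icc a b))
    (hg : ContinuousOn g (Set.Icc a b))
    (hconv : ∀ x ∈ Set.Icc a b, Tendsto (fun n => f n x) atTop (𝓝 (g x))) :
    TendstoUniformlyOn f g atTop (Set.Icc a b) := by
  rw [Metric.tendstoUniformlyOn_iff]
  intro ε hε
  have hucg : UniformContinuousOn g (Set.Icc a b) :=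
    isCompact_Icc.uniformContinuousOn_of_continuous hg
  rw [Metric.uniformContinuousOn_iff] at hucg
  obtain ⟨δ, hδ, hδ'⟩ := hucg (ε/3) (by positivity)
  obtain ⟨M, hM⟩ := exists_nat_gt ((b - a)/δ)
  have hba : 0 < b - a := sub_pos.mpr hab
  have hM0 : 0 < (M : ℝ) := lt_of_le_of_lt (by positivity) hM
  have hM1 : 1 ≤ M := Nat.one_le_iff_ne_zero.mpr (by exact_mod_cast hM0.ne')
  set Δ : ℝ := (b - a) / M with hΔdef
  have hΔpos : 0 < Δ := by positivity
  have hΔδ : Δ < δ := by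
    rw [div_lt_iff₀ hδ] at hM
    rw [hΔdef, div_lt_iff₀ hM0]
    linarith
  set x : ℕ → ℝ := fun i => a + i * Δ with hxdef
  have hxmem : ∀ i ≤ M, x i ∈ Set.Icc a b := by
    intro i hi
    constructor
    · simp only [hxdef]; nlinarith [hΔpos.le, Nat.cast_nonneg (α := ℝ) i]
    · have h1 : (i : ℝ) ≤ M := by exact_mod_cast hi
      have h2 : (i : ℝ) * Δ ≤ M * Δ := mul_le_mul_of_nonneg_right h1 hΔpos.le
      have h3 : (M : ℝ) * Δ = b - a := by
        rw [hΔdef]; field_simp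
      simp only [hxdef]; linarith
  have hev : ∀ᶠ n in atTop, ∀ i ∈ Finset.range (M + 1), dist (g (x i)) (f n (x i)) < ε/3 := by
    rw [eventually_all_finset]
    intro i hi
    have hmem : x i ∈ Set.Icc a b := hxmem i (Nat.lt_succ_iff.mp (Finset.mem_range.mp hi))
    filter_upwards [(hconv _ hmem) (Metric.ball_mem_nhds _ (by positivity : (0:ℝ) < ε/3))]
      with n hn
    rw [Set.mem_preimage, Metric.mem_ball] at hn
    rw [dist_comm]; exact hn
  filter_upwards [hev] with n hn y hy
  -- choose the grid interval containing y
  have hya : 0 ≤ y - a := sub_nonneg.mpr hy.1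
  set j : ℕ := min ⌊(y - a)/Δ⌋₊ (M - 1) with hjdef
  have hjM : j + 1 ≤ M := by
    have : j ≤ M - 1 := min_le_right _ _
    omega
  have hjmem : x j ∈ Set.Icc a b := hxmem j (by omega)
  have hj1mem : x (j + 1) ∈ Set.Icc a b := hxmem (j+1) hjM
  have hxjy : x j ≤ y := by
    have h1 : (j : ℝ) ≤ (y - a)/Δ := by
      have : (j : ℝ) ≤ (⌊(y - a)/Δ⌋₊ : ℝ) := by exact_mod_cast min_le_left _ _
      exact this.trans (Nat.floor_le (by positivity))
    have h2 : (j : ℝ) * Δ ≤ y - a := by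
      rw [← le_div_iff₀ hΔpos]; exact h1
    simp only [hxdef]; linarith
  have hyxj1 : y ≤ x (j + 1) := by
    rcases le_or_gt ⌊(y - a)/Δ⌋₊ (M - 1) with hcase | hcase
    · have hj : j = ⌊(y - a)/Δ⌋₊ := min_eq_left hcase
      have h1 : (y - a)/Δ < j + 1 := by
        rw [hj]; push_cast; exact Nat.lt_floor_add_one _
      have h2 : y - a < ((j : ℝ) + 1) * Δ := by
        rw [div_lt_iff₀ hΔpos] at h1; linarith
      simp only [hxdef]; push_cast; nlinarith
    · have hj : j = M - 1 := min_eq_right hcase.le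
      have : j + 1 = M := by omega
      rw [this]
      have h3 : (M : ℝ) * Δ = b - a := by rw [hΔdef]; field_simp
      simp only [hxdef]; rw [h3]; linarith [hy.2]
  have hΔgap : x (j+1) - x j = Δ := by simp only [hxdef]; push_cast; ring
  have hd1 : dist y (x j) < δ := by
    rw [Real.dist_eq, abs_lt]; constructor <;> nlinarith
  have hd2 : dist y (x (j+1)) < δ := by
    rw [Real.dist_eq, abs_lt]; constructor <;> nlinarith
  have eA := hδ' y hy (x j) hjmem hd1
  have eB := hδ' y hy (x (j+1)) hj1mem hd2
  have eC := hn j (Finset.mem_range.mpr (by omega))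
  have eD := hn (j+1) (Finset.mem_range.mpr (by omega))
  rw [Real.dist_eq] at eA eB eC eD ⊢
  obtain ⟨eA1, eA2⟩ := abs_lt.mp eA
  obtain ⟨eB1, eB2⟩ := abs_lt.mp eB
  obtain ⟨eC1, eC2⟩ := abs_lt.mp eC
  obtain ⟨eD1, eD2⟩ := abs_lt.mp eD
  have m1 : f n (x j) ≤ f n y := hf n hjmem hy hxjy
  have m2 : f n y ≤ f n (x (j+1)) := hf n hy hj1mem hyxj1
  rw [abs_lt]
  constructor <;> linarith

end Polya

section Renewal

variable {Ω : Type*} {ξ : ℕ → Ω → ℝ} {ω : Ω} {μ : ℝ}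

lemma pSum_zero : pSum ξ 0 ω = 0 := by simp [pSum]

lemma pSum_succ (k : ℕ) : pSum ξ (k+1) ω = pSum ξ k ω + ξ (k+1) ω := by
  unfold pSum
  rw [Finset.sum_Icc_succ_top (by omega : 1 ≤ k + 1)]

lemma pSum_strictMono (hpos : ∀ i, 0 < ξ i ω) : StrictMono (fun k => pSum ξ k ω) := by
  apply strictMono_nat_of_lt_succ
  intro k
  have := hpos (k+1)
  rw [pSum_succ]
  linarith

lemma pSum_tendsto_atTop (hμ : 0 < μ)
    (hS : Tendsto (fun k => pSum ξ k ω / k) atTop (𝓝 μ)) :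
    Tendsto (fun k => pSum ξ k ω) atTop atTop := by
  have h := Filter.Tendsto.pos_mul_atTop hμ hS tendsto_natCast_atTop_atTop
  apply h.congr'
  filter_upwards [eventually_ge_atTop 1] with k hk
  have hk0 : (k:ℝ) ≠ 0 := Nat.cast_ne_zero.mpr (by omega)
  field_simp

lemma cnt_bddAbove (hT : Tendsto (fun k => pSum ξ k ω) atTop atTop) (t : ℝ) :
    BddAbove {k : ℕ | pSum ξ k ω ≤ t} := by
  obtain ⟨K, hK⟩ := eventually_atTop.mp (tendsto_atTop.mp hT (t+1))
  refine ⟨K, fun k hk => ?_⟩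
  by_contra hc
  push_neg at hc
  have h1 := hK k hc.le
  have h2 : pSum ξ k ω ≤ t := hk
  linarith

lemma cnt_le (hT : Tendsto (fun k => pSum ξ k ω) atTop atTop) {k : ℕ} {t : ℝ}
    (h : pSum ξ k ω ≤ t) : k ≤ cnt ξ t ω :=
  le_csSup (cnt_bddAbove hT t) h

lemma cnt_spec1 (hT : Tendsto (fun k => pSum ξ k ω) atTop atTop) {t : ℝ} (ht : 0 ≤ t) :
    pSum ξ (cnt ξ t ω) ω ≤ t := by
  have hne : {k : ℕ | pSum ξ k ω ≤ t}.Nonempty := ⟨0, by simpa [pSum_zero] using ht⟩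
  exact Nat.sSup_mem hne (cnt_bddAbove hT t)

lemma cnt_spec2 (hT : Tendsto (fun k => pSum ξ k ω) atTop atTop) {t : ℝ} :
    t < pSum ξ (cnt ξ t ω + 1) ω := by
  by_contra hc
  push_neg at hc
  have := cnt_le hT hc
  omega

lemma cnt_mono (hT : Tendsto (fun k => pSum ξ k ω) atTop atTop) {t t' : ℝ} (h : t ≤ t') :
    cnt ξ t ω ≤ cnt ξ t' ω := by
  by_cases hne : {k : ℕ | pSum ξ k ω ≤ t}.Nonempty
  · exact csSup_le_csSup (cnt_bddAbove hT t') hne (fun k hk => le_trans hk h)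
  · have h0 : sSup {k : ℕ | pSum ξ k ω ≤ t} = 0 := by
      rw [Set.not_nonempty_iff_eq_empty.mp hne]
      exact csSup_empty
    unfold cnt
    rw [h0]
    exact Nat.zero_le _

lemma cnt_tendsto (hT : Tendsto (fun k => pSum ξ k ω) atTop atTop) :
    Tendsto (fun t : ℝ => cnt ξ t ω) atTop atTop := by
  rw [tendsto_atTop_atTop]
  intro k
  exact ⟨pSum ξ k ω, fun t ht => cnt_le hT ht⟩

lemma cnt_div_tendsto (hμ : 0 < μ)
    (hS : Tendsto (fun k => pSum ξ k ω / k) atTop (𝓝 μ)) :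
    Tendsto (fun t : ℝ => (cnt ξ t ω : ℝ) / t) atTop (𝓝 μ⁻¹) := by
  have hT := pSum_tendsto_atTop hμ hS
  have hNt : Tendsto (fun t : ℝ => cnt ξ t ω) atTop atTop := cnt_tendsto hT
  have h1 : Tendsto (fun t : ℝ => pSum ξ (cnt ξ t ω) ω / (cnt ξ t ω : ℝ)) atTop (𝓝 μ) :=
    hS.comp hNt
  have hup : Tendsto (fun k : ℕ => pSum ξ (k+1) ω / k) atTop (𝓝 μ) := by
    have ha : Tendsto (fun k : ℕ => pSum ξ (k+1) ω / ((k:ℝ)+1)) atTop (𝓝 μ) := by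
      have := hS.comp (tendsto_add_atTop_nat 1)
      refine Tendsto.congr (fun k => ?_) this
      simp only [Function.comp_apply]
      push_cast
      ring
    have hb : Tendsto (fun k : ℕ => ((k:ℝ)+1) / k) atTop (𝓝 1) := by
      have h0 : Tendsto (fun k : ℕ => 1 + 1/(k:ℝ)) atTop (𝓝 (1+0)) :=
        tendsto_const_nhds.add tendsto_one_div_atTop_nhds_zero_nat
      rw [add_zero] at h0
      apply Tendsto.congr' ?_ h0
      filter_upwards [eventually_ge_atTop 1] with k hk
      have hk0 : (k:ℝ) ≠ 0 := Nat.cast_ne_zero.mpr (by omega)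
      field_simp
    have hmul := ha.mul hb
    rw [mul_one] at hmul
    apply Tendsto.congr' ?_ hmul
    filter_upwards [eventually_ge_atTop 1] with k hk
    have hk0 : (k:ℝ) ≠ 0 := Nat.cast_ne_zero.mpr (by omega)
    have hk1 : (k:ℝ) + 1 ≠ 0 := by positivity
    push_cast
    field_simp
  have h2 : Tendsto (fun t : ℝ => pSum ξ (cnt ξ t ω + 1) ω / (cnt ξ t ω : ℝ)) atTop (𝓝 μ) :=
    hup.comp hNt
  have h3 : Tendsto (fun t : ℝ => t / (cnt ξ t ω : ℝ)) atTop (𝓝 μ) := by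
    apply tendsto_of_tendsto_of_tendsto_of_le_of_le' h1 h2
    · filter_upwards [eventually_ge_atTop (0:ℝ), hNt.eventually_ge_atTop 1] with t ht0 ht1
      have hNpos : (0:ℝ) < (cnt ξ t ω : ℝ) := by exact_mod_cast ht1
      have := cnt_spec1 hT ht0
      gcongr
    · filter_upwards [hNt.eventually_ge_atTop 1] with t ht1
      have hNpos : (0:ℝ) < (cnt ξ t ω : ℝ) := by exact_mod_cast ht1
      have := (cnt_spec2 hT (t := t)).le
      gcongr
  have h4 := h3.inv₀ hμ.ne'
  simpa [inv_div] using h4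

lemma cnt_zero_eq (hpos : ∀ i, 0 < ξ i ω) : cnt ξ 0 ω = 0 := by
  unfold cnt
  have hset : {k : ℕ | pSum ξ k ω ≤ 0} = {0} := by
    ext k
    simp only [Set.mem_setOf_eq, Set.mem_singleton_iff]
    constructor
    · intro h
      by_contra hk
      have h0 : (0:ℕ) < k := Nat.pos_of_ne_zero hk
      have h2 : pSum ξ 0 ω < pSum ξ k ω := pSum_strictMono hpos h0
      rw [pSum_zero] at h2
      linarith
    · rintro rfl
      rw [pSum_zero]
  rw [hset, csSup_singleton]

lemma cnt_scaled (hpos : ∀ i, 0 < ξ i ω) (hμ : 0 < μ)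
    (hS : Tendsto (fun k => pSum ξ k ω / k) atTop (𝓝 μ)) {s : ℝ} (hs : 0 ≤ s) :
    Tendsto (fun n : ℕ => (cnt ξ ((n:ℝ)*s) ω : ℝ) / n) atTop (𝓝 (s/μ)) := by
  rcases hs.eq_or_lt with rfl | hs'
  · have hfun : (fun n : ℕ => ((cnt ξ ((n:ℝ)*0) ω : ℝ))/n) = fun _ => 0 := by
      funext n
      simp [cnt_zero_eq hpos]
    rw [hfun, zero_div]
    exact tendsto_const_nhds
  · have hmain := cnt_div_tendsto hμ hS
    have hcomp : Tendsto (fun n : ℕ => (n:ℝ)*s) atTop atTop :=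
      tendsto_natCast_atTop_atTop.atTop_mul_const hs'
    have h2 : Tendsto (fun n : ℕ => (cnt ξ ((n:ℝ)*s) ω : ℝ)/((n:ℝ)*s) * s) atTop
        (𝓝 (μ⁻¹ * s)) := (hmain.comp hcomp).mul_const s
    have heq : ∀ᶠ n : ℕ in atTop,
        (cnt ξ ((n:ℝ)*s) ω : ℝ)/((n:ℝ)*s) * s = (cnt ξ ((n:ℝ)*s) ω : ℝ)/n := by
      filter_upwards [eventually_ge_atTop 1] with n hn
      have hn0 : (n:ℝ) ≠ 0 := Nat.cast_ne_zero.mpr (by omega)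
      field_simp
    rw [div_eq_inv_mul]
    exact Tendsto.congr' heq h2

end Renewal

section Window

/-- The limit of `Ncomp (n s) / n`. -/
noncomputable def flim (μ1 μ2 c : ℝ) (s : ℝ) : ℝ :=
  s/μ1 + max 0 (s - c) * (1/μ2 - 1/μ1)

lemma flim_continuous (μ1 μ2 c : ℝ) : Continuous (flim μ1 μ2 c) := by
  unfold flim
  exact (continuous_id.div_const _).add
    ((continuous_const.max (continuous_id.sub continuous_const)).mul continuous_const)

lemma muRi_pos_le {μ1 μ2 c h : ℝ} (hμ1 : 0 < μ1) (hμ2 : 0 < μ2) (hh : 0 < h) (t : ℝ) :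
    0 < muRi μ1 μ2 c h t ∧ muRi μ1 μ2 c h t ≤ max μ1 μ2 := by
  unfold muRi
  split_ifs with h1 h2
  · exact ⟨hμ1, le_max_left _ _⟩
  · exact ⟨hμ2, le_max_right _ _⟩
  · push_neg at h1 h2
    have hct : 0 < c - t := by linarith
    have hthc : 0 < t + h - c := by linarith
    have hden : 0 < (c - t)/μ1 + (t + h - c)/μ2 := by positivity
    have hmm : 0 < max μ1 μ2 := lt_max_of_lt_left hμ1
    refine ⟨by positivity, ?_⟩
    have hlow : h / max μ1 μ2 ≤ (c - t)/μ1 + (t + h - c)/μ2 := by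
      have l1 : (c - t)/max μ1 μ2 ≤ (c - t)/μ1 := by
        gcongr
        exact le_max_left _ _
      have l2 : (t + h - c)/max μ1 μ2 ≤ (t + h - c)/μ2 := by
        gcongr
        exact le_max_right _ _
      have l3 : h / max μ1 μ2 = (c-t)/max μ1 μ2 + (t+h-c)/max μ1 μ2 := by
        field_simp
        ring
      linarith
    have hq : 0 < h / max μ1 μ2 := by positivity
    calc h / ((c - t)/μ1 + (t + h - c)/μ2) ≤ h / (h / max μ1 μ2) := by gcongr
      _ = max μ1 μ2 := by field_simp

lemma muLe_pos_le {μ1 μ2 c h : ℝ} (hμ1 : 0 < μ1) (hμ2 : 0 < μ2) (hh : 0 < h) (t : ℝ) :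
    0 < muLe μ1 μ2 c h t ∧ muLe μ1 μ2 c h t ≤ max μ1 μ2 := by
  unfold muLe
  split_ifs with h1 h2
  · exact ⟨hμ1, le_max_left _ _⟩
  · exact ⟨hμ2, le_max_right _ _⟩
  · push_neg at h1 h2
    have hct : 0 < c - (t - h) := by linarith
    have hthc : 0 < t - c := by linarith
    have hden : 0 < (c - (t - h))/μ1 + (t - c)/μ2 := by positivity
    have hmm : 0 < max μ1 μ2 := lt_max_of_lt_left hμ1
    refine ⟨by positivity, ?_⟩
    have hlow : h / max μ1 μ2 ≤ (c - (t - h))/μ1 + (t - c)/μ2 := by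
      have l1 : (c - (t - h))/max μ1 μ2 ≤ (c - (t - h))/μ1 := by
        gcongr
        exact le_max_left _ _
      have l2 : (t - c)/max μ1 μ2 ≤ (t - c)/μ2 := by
        gcongr
        exact le_max_right _ _
      have l3 : h / max μ1 μ2 = (c - (t - h))/max μ1 μ2 + (t - c)/max μ1 μ2 := by
        field_simp
        ring
      linarith
    have hq : 0 < h / max μ1 μ2 := by positivity
    calc h / ((c - (t - h))/μ1 + (t - c)/μ2) ≤ h / (h / max μ1 μ2) := by gcongr
      _ = max μ1 μ2 := by field_simp

lemma flim_window_ri {μ1 μ2 c h : ℝ} (hμ1 : 0 < μ1) (hμ2 : 0 < μ2) (hh : 0 < h) (t : ℝ) :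
    flim μ1 μ2 c (t + h) - flim μ1 μ2 c t = h / muRi μ1 μ2 c h t := by
  unfold flim muRi
  split_ifs with h1 h2
  · rw [max_eq_left (by linarith), max_eq_left (by linarith)]
    field_simp
    ring
  · rw [max_eq_right (by linarith), max_eq_right (by linarith)]
    field_simp
    try ring
  · push_neg at h1 h2
    rw [max_eq_right (by linarith), max_eq_left (by linarith)]
    have hct : 0 < c - t := by linarith
    have hthc : 0 < t + h - c := by linarith
    have hden : 0 < (c - t)/μ1 + (t + h - c)/μ2 := by positivity
    have hcanc : h / (h / ((c - t)/μ1 + (t + h - c)/μ2)) = (c - t)/μ1 + (t + h - c)/μ2 := by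
      field_simp
    rw [hcanc]
    field_simp
    ring

lemma flim_window_le {μ1 μ2 c h : ℝ} (hμ1 : 0 < μ1) (hμ2 : 0 < μ2) (hh : 0 < h) (t : ℝ) :
    flim μ1 μ2 c t - flim μ1 μ2 c (t - h) = h / muLe μ1 μ2 c h t := by
  unfold flim muLe
  split_ifs with h1 h2
  · rw [max_eq_left (by linarith), max_eq_left (by linarith)]
    field_simp
    ring
  · rw [max_eq_right (by linarith), max_eq_right (by linarith)]
    field_simp
    try ring
  · push_neg at h1 h2
    rw [max_eq_right (by linarith), max_eq_left (by linarith)]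
    have hct : 0 < c - (t - h) := by linarith
    have hthc : 0 < t - c := by linarith
    have hden : 0 < (c - (t - h))/μ1 + (t - c)/μ2 := by positivity
    have hcanc : h / (h / ((c - (t - h))/μ1 + (t - c)/μ2))
        = (c - (t - h))/μ1 + (t - c)/μ2 := by
      field_simp
    rw [hcanc]
    field_simp
    ring

/-- Generic reduction: uniform convergence of `A n s / n` plus the window identity for the
limit gives uniform convergence of the window ratios to 1. -/
lemma ratio_unif {A : ℕ → ℝ → ℝ} {F : ℝ → ℝ} {T h : ℝ} {u v m : ℝ → ℝ}
    (hh : 0 < h) {mmax : ℝ} (hmmax : 0 < mmax)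
    (hU : TendstoUniformlyOn (fun (n : ℕ) s => A n s / n) F atTop (Set.Icc 0 T))
    (hm : ∀ t ∈ Set.Icc h (T - h), 0 < m t ∧ m t ≤ mmax)
    (hu : ∀ t ∈ Set.Icc h (T - h), u t ∈ Set.Icc 0 T)
    (hv : ∀ t ∈ Set.Icc h (T - h), v t ∈ Set.Icc 0 T)
    (hid : ∀ t ∈ Set.Icc h (T - h), F (u t) - F (v t) = h / m t) :
    TendstoUniformlyOn (fun (n : ℕ) t => (A n (u t) - A n (v t)) / ((n : ℝ) * h / m t))
      (fun _ => 1) atTop (Set.Icc h (T - h)) := by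
  rw [Metric.tendstoUniformlyOn_iff]
  intro ε hε
  have hε' : 0 < ε * h / (2 * mmax) := by positivity
  have hU' := (Metric.tendstoUniformlyOn_iff.mp hU) _ hε'
  filter_upwards [hU', eventually_ge_atTop 1] with n hn hn1 t ht
  have hn0 : (0:ℝ) < n := by exact_mod_cast (by omega : 0 < n)
  obtain ⟨hmpos, hmle⟩ := hm t ht
  have eu := hn (u t) (hu t ht)
  have ev := hn (v t) (hv t ht)
  rw [Real.dist_eq] at eu ev
  rw [Real.dist_eq]
  have key : (A n (u t) - A n (v t)) / ((n : ℝ) * h / m t) - 1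
      = ((A n (u t) / n - F (u t)) - (A n (v t) / n - F (v t))) * (m t / h) := by
    have hid' := hid t ht
    have hrw : (A n (u t) / n - F (u t)) - (A n (v t) / n - F (v t))
        = A n (u t)/n - A n (v t)/n - h / m t := by linarith
    rw [hrw]
    field_simp
  have habs : |(A n (u t) / n - F (u t)) - (A n (v t) / n - F (v t))|
      < 2 * (ε * h / (2 * mmax)) := by
    calc |(A n (u t) / n - F (u t)) - (A n (v t) / n - F (v t))|
        ≤ |A n (u t) / n - F (u t)| + |A n (v t) / n - F (v t)| := abs_sub _ _
      _ < ε * h / (2 * mmax) + ε * h / (2 * mmax) := by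
          rw [abs_sub_comm] at eu ev
          exact add_lt_add eu ev
      _ = 2 * (ε * h / (2 * mmax)) := by ring
  have hfinal : |((A n (u t) / n - F (u t)) - (A n (v t) / n - F (v t))) * (m t / h)| < ε := by
    rw [abs_mul, abs_of_pos (by positivity : (0:ℝ) < m t / h)]
    calc |(A n (u t) / n - F (u t)) - (A n (v t) / n - F (v t))| * (m t / h)
        ≤ |(A n (u t) / n - F (u t)) - (A n (v t) / n - F (v t))| * (mmax / h) := by
          gcongr
      _ < 2 * (ε * h / (2 * mmax)) * (mmax / h) := by
          apply mul_lt_mul_of_pos_right habs (by positivity)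
      _ = ε := by field_simp
  calc |1 - (A n (u t) - A n (v t)) / ((n : ℝ) * h / m t)|
      = |(A n (u t) - A n (v t)) / ((n : ℝ) * h / m t) - 1| := abs_sub_comm _ _
    _ < ε := by rw [key]; exact hfinal

end Window

section Master

variable {Ω : Type*}

lemma Ncomp_mono {ξ1 ξ2 : ℕ → Ω → ℝ} {ω : Ω} {c : ℝ}
    (hT1 : Tendsto (fun k => pSum ξ1 k ω) atTop atTop)
    (hT2 : Tendsto (fun k => pSum ξ2 k ω) atTop atTop)
    (n : ℕ) {t t' : ℝ} (h : t ≤ t') :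
    Ncomp ξ1 ξ2 c n t ω ≤ Ncomp ξ1 ξ2 c n t' ω := by
  unfold Ncomp
  split_ifs with h1 h2 h3
  · exact cnt_mono hT1 h
  · exact le_trans (cnt_mono hT1 h1) (Nat.le_add_right _ _)
  · exact absurd (h.trans h3) h1
  · exact Nat.add_le_add_left (Nat.sub_le_sub_right (cnt_mono hT2 h) _) _

lemma master {ξ1 ξ2 : ℕ → Ω → ℝ} {ω : Ω} {μ1 μ2 T c h : ℝ}
    (hμ1pos : 0 < μ1) (hμ2pos : 0 < μ2)
    (hT : 0 < T) (hc : 0 < c) (hcT : c < T) (hh : 0 < h)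
    (hpos1 : ∀ i, 0 < ξ1 i ω) (hpos2 : ∀ i, 0 < ξ2 i ω)
    (hS1 : Tendsto (fun k => pSum ξ1 k ω / k) atTop (𝓝 μ1))
    (hS2 : Tendsto (fun k => pSum ξ2 k ω / k) atTop (𝓝 μ2)) :
    TendstoUniformlyOn
        (fun (n : ℕ) (t : ℝ) =>
          ((Ncomp ξ1 ξ2 c n ((n : ℝ) * (t + h)) ω : ℝ)
              - (Ncomp ξ1 ξ2 c n ((n : ℝ) * t) ω : ℝ))
            / ((n : ℝ) * h / muRi μ1 μ2 c h t))
        (fun _ => 1) atTop (Set.Icc h (T - h)) ∧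
      TendstoUniformlyOn
        (fun (n : ℕ) (t : ℝ) =>
          ((Ncomp ξ1 ξ2 c n ((n : ℝ) * t) ω : ℝ)
              - (Ncomp ξ1 ξ2 c n ((n : ℝ) * (t - h)) ω : ℝ))
            / ((n : ℝ) * h / muLe μ1 μ2 c h t))
        (fun _ => 1) atTop (Set.Icc h (T - h)) := by
  have hT1 := pSum_tendsto_atTop hμ1pos hS1
  have hT2 := pSum_tendsto_atTop hμ2pos hS2
  have hpt : ∀ s ∈ Set.Icc (0:ℝ) T,
      Tendsto (fun n : ℕ => ((Ncomp ξ1 ξ2 c n ((n:ℝ)*s) ω : ℝ)) / n) atTop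
        (𝓝 (flim μ1 μ2 c s)) := by
    intro s hs
    rcases le_or_gt s c with hsc | hsc
    · have hflim : flim μ1 μ2 c s = s/μ1 := by
        unfold flim
        rw [max_eq_left (by linarith)]
        ring
      rw [hflim]
      refine Tendsto.congr (fun n => ?_) (cnt_scaled hpos1 hμ1pos hS1 hs.1)
      have hns : (n:ℝ)*s ≤ (n:ℝ)*c := mul_le_mul_of_nonneg_left hsc (Nat.cast_nonneg n)
      simp only [Ncomp, if_pos hns]
    · have h1 := cnt_scaled hpos1 hμ1pos hS1 hc.le
      have h2 := cnt_scaled hpos2 hμ2pos hS2 (le_trans hc.le hsc.le)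
      have h3 := cnt_scaled hpos2 hμ2pos hS2 hc.le
      have hcomb := h1.add (h2.sub h3)
      have hflim : flim μ1 μ2 c s = c/μ1 + (s/μ2 - c/μ2) := by
        unfold flim
        rw [max_eq_right (by linarith)]
        field_simp
        ring
      rw [hflim]
      apply Tendsto.congr' ?_ hcomb
      filter_upwards [eventually_ge_atTop 1] with n hn
      have hn0 : (0:ℝ) < n := by exact_mod_cast (by omega : 0 < n)
      have hlt : (n:ℝ)*c < (n:ℝ)*s := mul_lt_mul_of_pos_left hsc hn0
      have hnot : ¬ ((n:ℝ)*s ≤ (n:ℝ)*c) := not_le.mpr hlt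
      have hle : cnt ξ2 ((n:ℝ)*c) ω ≤ cnt ξ2 ((n:ℝ)*s) ω := cnt_mono hT2 hlt.le
      simp only [Ncomp, if_neg hnot]
      rw [Nat.cast_add, Nat.cast_sub hle]
      ring
  have hmono : ∀ n : ℕ, MonotoneOn
      (fun s => ((Ncomp ξ1 ξ2 c n ((n:ℝ)*s) ω : ℝ)) / n) (Set.Icc (0:ℝ) T) := by
    intro n s hs s' hs' hss'
    rcases Nat.eq_zero_or_pos n with rfl | hn
    · simp
    · have hn0 : (0:ℝ) < n := by exact_mod_cast hn
      show (Ncomp ξ1 ξ2 c n ((n:ℝ)*s) ω : ℝ) / n ≤ (Ncomp ξ1 ξ2 c n ((n:ℝ)*s') ω : ℝ) / n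
      gcongr
      exact_mod_cast Ncomp_mono hT1 hT2 n (mul_le_mul_of_nonneg_left hss' (Nat.cast_nonneg n))
  have hU : TendstoUniformlyOn (fun (n:ℕ) s => ((Ncomp ξ1 ξ2 c n ((n:ℝ)*s) ω : ℝ)) / n)
      (flim μ1 μ2 c) atTop (Set.Icc 0 T) :=
    polya hT hmono (flim_continuous μ1 μ2 c).continuousOn hpt
  have hmmax : 0 < max μ1 μ2 := lt_max_of_lt_left hμ1pos
  constructor
  · exact ratio_unif (A := fun n s => ((Ncomp ξ1 ξ2 c n ((n:ℝ)*s) ω : ℝ)))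
      (u := fun t => t + h) (v := fun t => t) (m := muRi μ1 μ2 c h) hh hmmax hU
      (fun t ht => muRi_pos_le hμ1pos hμ2pos hh t)
      (fun t ht => Set.mem_Icc.mpr ⟨show (0:ℝ) ≤ t + h by linarith [ht.1, ht.2],
        show t + h ≤ T by linarith [ht.1, ht.2]⟩)
      (fun t ht => Set.mem_Icc.mpr ⟨show (0:ℝ) ≤ t by linarith [ht.1, ht.2],
        show t ≤ T by linarith [ht.1, ht.2]⟩)
      (fun t ht => flim_window_ri hμ1pos hμ2pos hh t)
  · exact ratio_unif (A := fun n s => ((Ncomp ξ1 ξ2 c n ((n:ℝ)*s) ω : ℝ)))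
      (u := fun t => t) (v := fun t => t - h) (m := muLe μ1 μ2 c h) hh hmmax hU
      (fun t ht => muLe_pos_le hμ1pos hμ2pos hh t)
      (fun t ht => Set.mem_Icc.mpr ⟨show (0:ℝ) ≤ t by linarith [ht.1, ht.2],
        show t ≤ T by linarith [ht.1, ht.2]⟩)
      (fun t ht => Set.mem_Icc.mpr ⟨show (0:ℝ) ≤ t - h by linarith [ht.1, ht.2],
        show t - h ≤ T by linarith [ht.1, ht.2]⟩)
      (fun t ht => flim_window_le hμ1pos hμ2pos hh t)

end Master

section SLLN

lemma slln_pSum {Ω : Type*} [MeasurableSpace Ω] {P : Measure Ω} [IsProbabilityMeasure P]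
    {ξ : ℕ → Ω → ℝ} (hint : Integrable (ξ 1) P)
    (hindep : Pairwise fun i j => IndepFun (ξ (i+1)) (ξ (j+1)) P)
    (hident : ∀ i, IdentDistrib (ξ i) (ξ 1) P P) {μ : ℝ} (hμ : μ = ∫ ω, ξ 1 ω ∂P) :
    ∀ᵐ ω ∂P, Tendsto (fun k => pSum ξ k ω / k) atTop (𝓝 μ) := by
  have hident' : ∀ i, IdentDistrib (ξ (i+1)) (ξ (0+1)) P P := fun i =>
    (hident (i+1)).trans (hident 1).symm
  have h := strong_law_ae_real (fun i => ξ (i+1)) hint hindep hident'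
  filter_upwards [h] with ω hω
  have heq : ∀ k : ℕ, (∑ i ∈ Finset.range k, ξ (i+1) ω) / k = pSum ξ k ω / k := by
    intro k
    congr 1
    rw [pSum]
    induction k with
    | zero => simp
    | succ k ih =>
      rw [Finset.sum_range_succ, ih, Finset.sum_Icc_succ_top (by omega : 1 ≤ k + 1)]
  rw [hμ]
  exact Tendsto.congr heq hω

end SLLN

/-- in the change-point renewal model, almost surely
`sup_{t ∈ [h,T−h]} |(N_{n(t+h)} − N_{nt})/(nh/μ_ri(h,t)) − 1| → 0` and
`sup_{t ∈ [h,T−h]} |(N_{nt} − N_{n(t−h)})/(nh/μ_le(h,t)) − 1| → 0` as `n → ∞`. -/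
theorem window_counts_changepoint_tendstoUniformlyOn_ae
    {Ω : Type*} [MeasurableSpace Ω] (P : Measure Ω) [IsProbabilityMeasure P]
    (ξ1 ξ2 : ℕ → Ω → ℝ)
    (hmeas1 : ∀ i, Measurable (ξ1 i)) (hmeas2 : ∀ i, Measurable (ξ2 i))
    (hindep : iIndepFun (Sum.elim ξ1 ξ2 : ℕ ⊕ ℕ → Ω → ℝ) P)
    (hident1 : ∀ i, IdentDistrib (ξ1 i) (ξ1 1) P P)
    (hident2 : ∀ i, IdentDistrib (ξ2 i) (ξ2 1) P P)
    (hpos1 : ∀ i, ∀ᵐ ω ∂P, 0 < ξ1 i ω) (hpos2 : ∀ i, ∀ᵐ ω ∂P, 0 < ξ2 i ω)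
    (hL41 : MemLp (ξ1 1) 4 P) (hL42 : MemLp (ξ2 1) 4 P)
    (μ1 μ2 : ℝ) (hμ1 : μ1 = ∫ ω, ξ1 1 ω ∂P) (hμ2 : μ2 = ∫ ω, ξ2 1 ω ∂P)
    (hμ1pos : 0 < μ1) (hμ2pos : 0 < μ2) (hμne : μ1 ≠ μ2)
    (T c h : ℝ) (hT : 0 < T) (hc : 0 < c) (hcT : c < T) (hh : 0 < h) (hhT : h ≤ T / 2) :
    ∀ᵐ ω ∂P,
      TendstoUniformlyOn
        (fun (n : ℕ) (t : ℝ) =>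
          ((Ncomp ξ1 ξ2 c n ((n : ℝ) * (t + h)) ω : ℝ)
              - (Ncomp ξ1 ξ2 c n ((n : ℝ) * t) ω : ℝ))
            / ((n : ℝ) * h / muRi μ1 μ2 c h t))
        (fun _ => 1) atTop (Set.Icc h (T - h)) ∧
      TendstoUniformlyOn
        (fun (n : ℕ) (t : ℝ) =>
          ((Ncomp ξ1 ξ2 c n ((n : ℝ) * t) ω : ℝ)
              - (Ncomp ξ1 ξ2 c n ((n : ℝ) * (t - h)) ω : ℝ))
            / ((n : ℝ) * h / muLe μ1 μ2 c h t))
        (fun _ => 1) atTop (Set.Icc h (T - h)) := by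
  have hpos1' : ∀ᵐ ω ∂P, ∀ i, 0 < ξ1 i ω := ae_all_iff.mpr hpos1
  have hpos2' : ∀ᵐ ω ∂P, ∀ i, 0 < ξ2 i ω := ae_all_iff.mpr hpos2
  have slln1 : ∀ᵐ ω ∂P, Tendsto (fun k => pSum ξ1 k ω / k) atTop (𝓝 μ1) := by
    apply slln_pSum (hL41.integrable (by norm_num)) ?_ hident1 hμ1
    intro i j hij
    exact hindep.indepFun (show (Sum.inl (i+1) : ℕ ⊕ ℕ) ≠ Sum.inl (j+1) by simp [hij])
  have slln2 : ∀ᵐ ω ∂P, Tendsto (fun k => pSum ξ2 k ω / k) atTop (𝓝 μ2) := by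
    apply slln_pSum (hL42.integrable (by norm_num)) ?_ hident2 hμ2
    intro i j hij
    exact hindep.indepFun (show (Sum.inr (i+1) : ℕ ⊕ ℕ) ≠ Sum.inr (j+1) by simp [hij])
  filter_upwards [slln1, slln2, hpos1', hpos2'] with ω h1 h2 h3 h4
  exact master hμ1pos hμ2pos hT hc hcT hh h3 h4 h1 h2
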